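/- Multiple Bernoulli polynomials satisfy B_{r,r}(z | (ω, η)) + B_{r,r}(z | (ω, -η)) = -r · B_{r-1,r-1}(z | ω), where (ω, ±η) denotes the (r)-tuple obtained by appending ±η to the (r-1)-tuple ω. -/

import Mathlib

open Complex

/-- The multiple Bernoulli polynomial `B_{r,n}(z|ω)`, defined by the generating function
`t^r e^{zt} / ∏ᵢ (e^{ωᵢ t} - 1) = ∑ₙ B_{r,n}(z|ω) tⁿ/n!`; equivalently, via the expansion
`e^{zt} ∏ᵢ t/(e^{ωᵢt}-1)` in terms of the ordinary Bernoulli numbers. -/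
noncomputable def multBernoulli (r n : ℕ) (z : ℂ) (ω : Fin r → ℂ) : ℂ :=
  (n.factorial : ℂ) * ∑ k ∈ Finset.Nat.antidiagonalTuple (r+1) n,
    z ^ k 0 / ((k 0).factorial : ℂ) *
      ∏ i : Fin r,
        ((bernoulli (k i.succ) : ℚ) : ℂ) * ω i ^ ((k i.succ : ℤ) - 1) /
          ((k i.succ).factorial : ℂ)

lemma pairing (m : ℕ) (η : ℂ) :
    ((bernoulli m : ℚ) : ℂ) * η ^ ((m : ℤ) - 1) / (m.factorial : ℂ)
      + ((bernoulli m : ℚ) : ℂ) * (-η) ^ ((m : ℤ) - 1) / (m.factorial : ℂ)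
      = if m = 1 then -1 else 0 := by
  rcases eq_or_ne m 1 with rfl | hm
  · simp [bernoulli_one]
  · rw [if_neg hm]
    rcases Nat.even_or_odd m with he | ho
    · have hodd : Odd ((m : ℤ) - 1) := Even.sub_odd (by exact_mod_cast he) odd_one
      rw [hodd.neg_zpow]
      ring
    · have h1 : 1 < m := lt_of_le_of_ne ho.pos hm.symm
      have : bernoulli m = 0 := by
        rw [bernoulli, bernoulli'_eq_zero_of_odd ho h1, mul_zero]
      simp [this]

/-- `B_{r,r}(z | (ω, η)) + B_{r,r}(z | (ω, -η)) = -r ⬝ B_{r-1,r-1}(z | ω)`. -/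
theorem stmt16 (r : ℕ) (z η : ℂ) (ω : Fin r → ℂ) :
    multBernoulli (r+1) (r+1) z (Fin.snoc ω η) +
        multBernoulli (r+1) (r+1) z (Fin.snoc ω (-η)) =
      -((r : ℂ) + 1) * multBernoulli r r z ω := by

  unfold multBernoulli
  rw [← mul_add, ← Finset.sum_add_distrib]
  have key : ∀ k : Fin (r+2) → ℕ,
      (z ^ k 0 / ((k 0).factorial : ℂ) *
        ∏ i : Fin (r+1), ((bernoulli (k i.succ) : ℚ) : ℂ) *
          (Fin.snoc ω η : Fin (r+1) → ℂ) i ^ ((k i.succ : ℤ) - 1) / ((k i.succ).factorial : ℂ)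
      + z ^ k 0 / ((k 0).factorial : ℂ) *
        ∏ i : Fin (r+1), ((bernoulli (k i.succ) : ℚ) : ℂ) *
          (Fin.snoc ω (-η) : Fin (r+1) → ℂ) i ^ ((k i.succ : ℤ) - 1) / ((k i.succ).factorial : ℂ))
      = if k (Fin.last (r+1)) = 1 then
          -(z ^ k 0 / ((k 0).factorial : ℂ) *
            ∏ i : Fin r, ((bernoulli (k i.succ.castSucc) : ℚ) : ℂ) *
              ω i ^ ((k i.succ.castSucc : ℤ) - 1) / ((k i.succ.castSucc).factorial : ℂ))
        else 0 := by
    intro k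
    rw [Fin.prod_univ_castSucc, Fin.prod_univ_castSucc
      (fun i : Fin (r+1) => ((bernoulli (k i.succ) : ℚ) : ℂ) *
          (Fin.snoc ω (-η) : Fin (r+1) → ℂ) i ^ ((k i.succ : ℤ) - 1) / ((k i.succ).factorial : ℂ))]
    simp only [Fin.snoc_castSucc, Fin.snoc_last, Fin.succ_castSucc, Fin.succ_last]
    rw [← mul_add, ← mul_add, pairing (k (Fin.last (r+1))) η]
    split_ifs
    · ring
    · ring
  rw [Finset.sum_congr rfl (fun k _ => key k), ← Finset.sum_filter]
  have bij : ∑ k ∈ Finset.filter (fun k => k (Fin.last (r+1)) = 1)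
        (Finset.Nat.antidiagonalTuple (r+1+1) (r+1)),
      -(z ^ k 0 / ((k 0).factorial : ℂ) *
        ∏ i : Fin r, ((bernoulli (k i.succ.castSucc) : ℚ) : ℂ) *
          ω i ^ ((k i.succ.castSucc : ℤ) - 1) / ((k i.succ.castSucc).factorial : ℂ))
      = ∑ m ∈ Finset.Nat.antidiagonalTuple (r+1) r,
      -(z ^ m 0 / ((m 0).factorial : ℂ) *
        ∏ i : Fin r, ((bernoulli (m i.succ) : ℚ) : ℂ) *
          ω i ^ ((m i.succ : ℤ) - 1) / ((m i.succ).factorial : ℂ)) := by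
    refine Finset.sum_nbij' (fun k => Fin.init k) (fun m => Fin.snoc m 1) ?_ ?_ ?_ ?_ ?_
    · intro k hk
      rw [Finset.mem_filter, Finset.Nat.mem_antidiagonalTuple, Fin.sum_univ_castSucc] at hk
      rw [Finset.Nat.mem_antidiagonalTuple]
      obtain ⟨h1, h2⟩ := hk
      simp only [h2] at h1
      simp only [Fin.init]
      omega
    · intro m hm
      rw [Finset.Nat.mem_antidiagonalTuple] at hm
      rw [Finset.mem_filter, Finset.Nat.mem_antidiagonalTuple, Fin.sum_univ_castSucc]
      simp [Fin.snoc_castSucc, Fin.snoc_last, hm]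
    · intro k hk
      rw [Finset.mem_filter] at hk
      have h := Fin.snoc_init_self k
      rwa [hk.2] at h
    · intro m _
      exact Fin.init_snoc _ _
    · intro k _
      simp [Fin.init]
  rw [bij, Finset.sum_neg_distrib]
  push_cast [Nat.factorial_succ]
  ring
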